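/- The equilibrium state attains the supremum: Let f:Ω→ℝ be α-Hölder, 0<α<1, and suppose λ_f>0, a strictly positive continuous function h_f with ∫_Ω h_f dν_f = 1, and a Borel probability measure ν_f satisfy L_f h_f = λ_f h_f and ∫_Ω (L_f φ) dν_f = λ_f ∫_Ω φ dν_f for every continuous φ. Let m_f be the Borel probability measure on Ω with dm_f = h_f dν_f. Then m_f is σ-invariant and h(m_f) + ∫_Ω f dm_f = log λ_f, where h(m_f) := inf{ −∫_Ω g dm_f + P(g) : g α-Hölder } and P(g) := lim_{n→∞} (1/n) log[(L_g^n 𝟙)(x₀)] for a fixed point x₀∈Ω. -/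

import Mathlib

open MeasureTheory Filter Topology
open scoped NNReal ENNReal

noncomputable def dOmega {M : Type*} [MetricSpace M] (x y : ℕ → M) : ℝ :=
  ∑' n : ℕ, (1 / 2 : ℝ) ^ (n + 1) * dist (x n) (y n)

def consSeq {M : Type*} (a : M) (x : ℕ → M) : ℕ → M := fun n => Nat.casesOn n a x

def shift {M : Type*} (x : ℕ → M) : ℕ → M := fun n => x (n + 1)

noncomputable def Ruelle {M : Type*} [MeasurableSpace M] (μ : Measure M)
    (f φ : (ℕ → M) → ℝ) : (ℕ → M) → ℝ :=
  fun x => ∫ a, Real.exp (f (consSeq a x)) * φ (consSeq a x) ∂μ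

noncomputable def birkhoff {M : Type*} (φ : (ℕ → M) → ℝ) (n : ℕ) : (ℕ → M) → ℝ :=
  fun x => ∑ j ∈ Finset.range n, φ (shift^[j] x)

def IsHolder {M : Type*} [MetricSpace M] (α : ℝ) (f : (ℕ → M) → ℝ) : Prop :=
  ∃ C : ℝ, 0 ≤ C ∧ ∀ x y, |f x - f y| ≤ C * dOmega x y ^ α

section Aux
variable {M : Type*} [MetricSpace M] [CompactSpace M]

lemma shift_consSeq (a : M) (x : ℕ → M) : shift (consSeq a x) = x := rfl

lemma dist_le_diam (p q : M) : dist p q ≤ Metric.diam (Set.univ : Set M) :=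
  Metric.dist_le_diam_of_mem isCompact_univ.isBounded trivial trivial

lemma dOmega_term_summable (x y : ℕ → M) :
    Summable (fun n : ℕ => (1 / 2 : ℝ) ^ (n + 1) * dist (x n) (y n)) := by
  have hg : Summable (fun n : ℕ => (1/2 : ℝ) ^ (n+1) * Metric.diam (Set.univ : Set M)) := by
    apply Summable.mul_right
    exact (summable_geometric_of_lt_one (by norm_num) (by norm_num)).comp_injective
      (add_left_injective 1)
  exact Summable.of_nonneg_of_le (fun n => by positivity)
    (fun n => mul_le_mul_of_nonneg_left (dist_le_diam _ _) (by positivity)) hg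

lemma dOmega_nonneg (x y : ℕ → M) : 0 ≤ dOmega x y :=
  tsum_nonneg (fun n => by positivity)

lemma tsum_half_pow : ∑' n : ℕ, (1/2 : ℝ) ^ (n + 1) = 1 := by
  have : ∀ n : ℕ, (1/2 : ℝ) ^ (n+1) = (1/2 : ℝ)^n * (1/2) := fun n => pow_succ _ _
  rw [tsum_congr this, tsum_mul_right, tsum_geometric_of_lt_one (by norm_num) (by norm_num)]
  norm_num

lemma dOmega_le_diam (x y : ℕ → M) : dOmega x y ≤ Metric.diam (Set.univ : Set M) := by
  have h1 : dOmega x y ≤ ∑' n : ℕ, (1/2 : ℝ) ^ (n+1) * Metric.diam (Set.univ : Set M) := by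
    apply Summable.tsum_le_tsum _ (dOmega_term_summable x y)
    · apply Summable.mul_right
      exact (summable_geometric_of_lt_one (by norm_num) (by norm_num)).comp_injective
        (add_left_injective 1)
    · intro n; exact mul_le_mul_of_nonneg_left (dist_le_diam _ _) (by positivity)
  rwa [tsum_mul_right, tsum_half_pow, one_mul] at h1

lemma dOmega_cons (a : M) (x y : ℕ → M) :
    dOmega (consSeq a x) (consSeq a y) = (1/2) * dOmega x y := by
  unfold dOmega
  rw [Summable.tsum_eq_zero_add (dOmega_term_summable (consSeq a x) (consSeq a y))]
  have h0 : (1/2:ℝ)^(0+1) * dist (consSeq a x 0) (consSeq a y 0) = 0 := by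
    simp [consSeq]
  rw [h0, zero_add, ← tsum_mul_left]
  apply tsum_congr
  intro n
  show (1/2:ℝ)^(n+1+1) * dist (x n) (y n) = 1/2 * ((1/2)^(n+1) * dist (x n) (y n))
  ring

lemma dOmega_self (x : ℕ → M) : dOmega x x = 0 := by
  unfold dOmega; simp

end Aux

section Cont
variable {M : Type*} [MetricSpace M] [CompactSpace M]

lemma continuous_dOmega_left (x : ℕ → M) : Continuous (fun y : ℕ → M => dOmega x y) := by
  apply continuous_tsum
    (u := fun n : ℕ => (1/2 : ℝ) ^ (n+1) * Metric.diam (Set.univ : Set M))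
  · intro n
    exact continuous_const.mul (Continuous.dist continuous_const (continuous_apply n))
  · apply Summable.mul_right
    exact (summable_geometric_of_lt_one (by norm_num) (by norm_num)).comp_injective
      (add_left_injective 1)
  · intro n y
    rw [Real.norm_eq_abs, abs_of_nonneg (by positivity)]
    exact mul_le_mul_of_nonneg_left (dist_le_diam _ _) (by positivity)

lemma IsHolder.continuous {α : ℝ} (hα : 0 < α) {g : (ℕ → M) → ℝ} (hg : IsHolder α g) :
    Continuous g := by
  obtain ⟨C, hC0, hC⟩ := hg
  rw [continuous_iff_continuousAt]; intro x
  have hd : Tendsto (fun y => dOmega x y) (𝓝 x) (𝓝 0) := by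
    have := (continuous_dOmega_left x).tendsto x
    rwa [dOmega_self] at this
  have hb : Tendsto (fun y => C * dOmega x y ^ α) (𝓝 x) (𝓝 0) := by
    have hcont : ContinuousAt (fun t : ℝ => C * t ^ α) 0 :=
      continuousAt_const.mul (Real.continuousAt_rpow_const 0 α (Or.inr hα.le))
    have h2 := hcont.tendsto.comp hd
    simpa [Function.comp_def, Real.zero_rpow hα.ne'] using h2
  rw [ContinuousAt, tendsto_iff_dist_tendsto_zero]
  apply squeeze_zero (fun y => dist_nonneg) (fun y => ?_) hb
  rw [Real.dist_eq, abs_sub_comm]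
  exact hC x y

lemma continuous_consSeq (x : ℕ → M) : Continuous (fun a : M => consSeq a x) := by
  apply continuous_pi; intro n
  cases n with
  | zero => exact continuous_id
  | succ n => exact continuous_const

lemma continuous_consSeq' (a : M) : Continuous (fun x : ℕ → M => consSeq a x) := by
  apply continuous_pi; intro n
  cases n with
  | zero => exact continuous_const
  | succ n => exact continuous_apply n

lemma continuous_shift : Continuous (shift : (ℕ → M) → (ℕ → M)) :=
  continuous_pi fun n => continuous_apply (n+1)

lemma cont_integrable {X : Type*} [TopologicalSpace X] [CompactSpace X] [MeasurableSpace X]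
    [OpensMeasurableSpace X] [T2Space X] (κ : Measure X) [IsFiniteMeasure κ] {ψ : X → ℝ}
    (hψ : Continuous ψ) : Integrable ψ κ :=
  hψ.integrable_of_hasCompactSupport (HasCompactSupport.of_compactSpace ψ)

lemma integral_pos_of_cont {X : Type*} [TopologicalSpace X] [CompactSpace X] [Nonempty X]
    [MeasurableSpace X] [OpensMeasurableSpace X] [T2Space X] (κ : Measure X)
    [IsProbabilityMeasure κ] {ψ : X → ℝ} (hψ : Continuous ψ) (hpos : ∀ x, 0 < ψ x) :
    0 < ∫ x, ψ x ∂κ := by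
  obtain ⟨z, -, hz⟩ := isCompact_univ.exists_isMinOn Set.univ_nonempty hψ.continuousOn
  have hz : ∀ y, ψ z ≤ ψ y := fun y => hz (Set.mem_univ y)
  calc (0:ℝ) < ψ z := hpos z
    _ = ∫ _x, ψ z ∂κ := by simp
    _ ≤ ∫ x, ψ x ∂κ := integral_mono (integrable_const _) (cont_integrable κ hψ) (fun x => hz x)

variable [MeasurableSpace M] [BorelSpace M]

lemma ruelle_continuous (μ : Measure M) [IsFiniteMeasure μ] {g φ : (ℕ → M) → ℝ}
    (hgc : Continuous g) (hφc : Continuous φ) : Continuous (Ruelle μ g φ) := by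
  obtain ⟨B, hB⟩ : ∃ B : ℝ, ∀ y : ℕ → M, ‖Real.exp (g y) * φ y‖ ≤ B := by
    obtain ⟨B, hB⟩ := isCompact_univ.exists_bound_of_continuousOn
      ((Real.continuous_exp.comp hgc).mul hφc).continuousOn
    exact ⟨B, fun y => hB y trivial⟩
  rw [continuous_iff_continuousAt]; intro x
  apply MeasureTheory.continuousAt_of_dominated (bound := fun _ => B)
  · exact Eventually.of_forall fun x' =>
      ((Real.continuous_exp.comp (hgc.comp (continuous_consSeq x'))).mul
        (hφc.comp (continuous_consSeq x'))).aestronglyMeasurable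
  · exact Eventually.of_forall fun x' => Eventually.of_forall fun a => hB _
  · exact integrable_const B
  · exact Eventually.of_forall fun a =>
      (((Real.continuous_exp.comp (hgc.comp (continuous_consSeq' a))).mul
        (hφc.comp (continuous_consSeq' a)))).continuousAt

lemma ruelle_pos (μ : Measure M) [IsProbabilityMeasure μ] [Nonempty M] {g φ : (ℕ → M) → ℝ}
    (hgc : Continuous g) (hφc : Continuous φ) (hφ : ∀ y, 0 < φ y) (x : ℕ → M) :
    0 < Ruelle μ g φ x :=
  integral_pos_of_cont μ ((Real.continuous_exp.comp (hgc.comp (continuous_consSeq x))).mul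
    (hφc.comp (continuous_consSeq x))) (fun a => mul_pos (Real.exp_pos _) (hφ _))

lemma ruelle_iter_one (μ : Measure M) [IsProbabilityMeasure μ] [Nonempty M] {g : (ℕ → M) → ℝ}
    (hgc : Continuous g) (n : ℕ) :
    Continuous ((Ruelle μ g)^[n] 1) ∧ ∀ x, 0 < (Ruelle μ g)^[n] 1 x := by
  induction n with
  | zero => exact ⟨continuous_const, fun x => one_pos⟩
  | succ n ih =>
    rw [Function.iterate_succ']
    exact ⟨ruelle_continuous μ hgc ih.1,
      fun x => ruelle_pos μ hgc ih.1 ih.2 x⟩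

end Cont

section Comparison
variable {M : Type*} [MetricSpace M] [CompactSpace M] [MeasurableSpace M] [BorelSpace M]

lemma geom_aux {r : ℝ} (h0 : 0 ≤ r) (h1 : r < 1) (n : ℕ) :
    ∑ k ∈ Finset.range n, r ^ (k+1) ≤ (1 - r)⁻¹ := by
  calc ∑ k ∈ Finset.range n, r ^ (k+1)
      ≤ ∑ k ∈ Finset.range n, r ^ k :=
        Finset.sum_le_sum fun k _ => pow_le_pow_of_le_one h0 h1.le (Nat.le_succ k)
    _ ≤ ∑' k : ℕ, r ^ k :=
        Summable.sum_le_tsum _ (fun i _ => pow_nonneg h0 i) (summable_geometric_of_lt_one h0 h1)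
    _ = (1 - r)⁻¹ := tsum_geometric_of_lt_one h0 h1

lemma ruelle_iterate_comparison (μ : Measure M) [IsProbabilityMeasure μ] [Nonempty M]
    {α : ℝ} (hα : 0 < α) {g : (ℕ → M) → ℝ} (hg : IsHolder α g) :
    ∃ K : ℝ, 0 ≤ K ∧ ∀ n : ℕ, ∀ x y : ℕ → M,
      (Ruelle μ g)^[n] 1 x ≤ Real.exp K * (Ruelle μ g)^[n] 1 y := by
  obtain ⟨C, hC0, hC⟩ := hg
  have hgc : Continuous g := IsHolder.continuous hα ⟨C, hC0, hC⟩
  set r : ℝ := (1/2 : ℝ) ^ α with hr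
  have hr0 : 0 ≤ r := Real.rpow_nonneg (by norm_num) α
  have hr1 : r < 1 := Real.rpow_lt_one (by norm_num) (by norm_num) hα
  set S : ℕ → ℝ := fun n => ∑ k ∈ Finset.range n, r ^ (k+1) with hSdef
  have hSnonneg : ∀ n, 0 ≤ S n := fun n => Finset.sum_nonneg fun k _ => pow_nonneg hr0 _
  have hSle : ∀ n, S n ≤ (1 - r)⁻¹ := fun n => geom_aux hr0 hr1 n
  have hSsucc : ∀ n, S (n+1) = r + r * S n := by
    intro n
    show (∑ k ∈ Finset.range (n+1), r ^ (k+1)) = r + r * ∑ k ∈ Finset.range n, r ^ (k+1)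
    rw [Finset.sum_range_succ' (fun k => r ^ (k+1)) n, Finset.mul_sum]
    simp only [pow_succ, pow_zero, one_mul]
    rw [add_comm]
    congr 1
    apply Finset.sum_congr rfl
    intro k _
    ring
  have key : ∀ n : ℕ, ∀ x y : ℕ → M,
      (Ruelle μ g)^[n] 1 x ≤ Real.exp (C * S n * dOmega x y ^ α) * (Ruelle μ g)^[n] 1 y := by
    intro n
    induction n with
    | zero =>
      intro x y
      simp [hSdef]
    | succ n ih =>
      intro x y
      rw [Function.iterate_succ_apply']
      have hLcont : Continuous ((Ruelle μ g)^[n] 1) := (ruelle_iter_one μ hgc n).1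
      have hLpos : ∀ z, 0 < (Ruelle μ g)^[n] 1 z := (ruelle_iter_one μ hgc n).2
      have hpt : ∀ a : M,
          Real.exp (g (consSeq a x)) * (Ruelle μ g)^[n] 1 (consSeq a x)
          ≤ Real.exp (C * S (n+1) * dOmega x y ^ α) *
            (Real.exp (g (consSeq a y)) * (Ruelle μ g)^[n] 1 (consSeq a y)) := by
        intro a
        have hd : dOmega (consSeq a x) (consSeq a y) ^ α = r * dOmega x y ^ α := by
          rw [dOmega_cons, Real.mul_rpow (by norm_num) (dOmega_nonneg x y)]
        have h1 : Real.exp (g (consSeq a x)) ≤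
            Real.exp (C * (r * dOmega x y ^ α)) * Real.exp (g (consSeq a y)) := by
          rw [← Real.exp_add]
          apply Real.exp_le_exp.2
          have habs := hC (consSeq a x) (consSeq a y)
          rw [hd] at habs
          have h2 := (abs_le.1 habs).2
          linarith
        have h2 := ih (consSeq a x) (consSeq a y)
        rw [hd] at h2
        calc Real.exp (g (consSeq a x)) * (Ruelle μ g)^[n] 1 (consSeq a x)
            ≤ (Real.exp (C * (r * dOmega x y ^ α)) * Real.exp (g (consSeq a y))) *
              (Real.exp (C * S n * (r * dOmega x y ^ α)) * (Ruelle μ g)^[n] 1 (consSeq a y)) := by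
              apply mul_le_mul h1 h2 (hLpos _).le
              positivity
          _ = Real.exp (C * S (n+1) * dOmega x y ^ α) *
              (Real.exp (g (consSeq a y)) * (Ruelle μ g)^[n] 1 (consSeq a y)) := by
              have hE : C * S (n+1) * dOmega x y ^ α =
                  C * (r * dOmega x y ^ α) + C * S n * (r * dOmega x y ^ α) := by
                rw [hSsucc n]; ring
              rw [← Real.exp_add, hE, Real.exp_add, Real.exp_add]
              ring
      have hintx : Integrable
          (fun a => Real.exp (g (consSeq a x)) * (Ruelle μ g)^[n] 1 (consSeq a x)) μ :=
        cont_integrable μ ((Real.continuous_exp.comp (hgc.comp (continuous_consSeq x))).mul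
          (hLcont.comp (continuous_consSeq x)))
      have hinty : Integrable
          (fun a => Real.exp (g (consSeq a y)) * (Ruelle μ g)^[n] 1 (consSeq a y)) μ :=
        cont_integrable μ ((Real.continuous_exp.comp (hgc.comp (continuous_consSeq y))).mul
          (hLcont.comp (continuous_consSeq y)))
      calc Ruelle μ g ((Ruelle μ g)^[n] 1) x
          ≤ ∫ a, Real.exp (C * S (n+1) * dOmega x y ^ α) *
              (Real.exp (g (consSeq a y)) * (Ruelle μ g)^[n] 1 (consSeq a y)) ∂μ :=
            integral_mono hintx (hinty.const_mul _) hpt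
        _ = Real.exp (C * S (n+1) * dOmega x y ^ α) * Ruelle μ g ((Ruelle μ g)^[n] 1) y :=
            integral_const_mul _ _
  refine ⟨C * (1 - r)⁻¹ * Metric.diam (Set.univ : Set M) ^ α, ?_, ?_⟩
  · have : (0:ℝ) ≤ (1 - r)⁻¹ := by
      rw [inv_nonneg]; linarith
    positivity
  · intro n x y
    refine (key n x y).trans (mul_le_mul_of_nonneg_right (Real.exp_le_exp.2 ?_)
      ((ruelle_iter_one μ hgc n).2 y).le)
    have h1 : dOmega x y ^ α ≤ Metric.diam (Set.univ : Set M) ^ α :=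
      Real.rpow_le_rpow (dOmega_nonneg x y) (dOmega_le_diam x y) hα.le
    have h2 : (0:ℝ) ≤ (1 - r)⁻¹ := by rw [inv_nonneg]; linarith
    have h3 : (0:ℝ) ≤ dOmega x y ^ α := Real.rpow_nonneg (dOmega_nonneg x y) α
    calc C * S n * dOmega x y ^ α ≤ C * (1 - r)⁻¹ * dOmega x y ^ α := by
          apply mul_le_mul_of_nonneg_right (mul_le_mul_of_nonneg_left (hSle n) hC0) h3
      _ ≤ C * (1 - r)⁻¹ * Metric.diam (Set.univ : Set M) ^ α := by
          apply mul_le_mul_of_nonneg_left h1 (by positivity)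

end Comparison

section More
variable {M : Type*} [MetricSpace M] [CompactSpace M]

lemma continuous_shift_iter (j : ℕ) : Continuous (shift^[j] : (ℕ → M) → (ℕ → M)) := by
  induction j with
  | zero => exact continuous_id
  | succ j ih =>
    rw [Function.iterate_succ]
    exact ih.comp continuous_shift

lemma birkhoff_continuous {ψ : (ℕ → M) → ℝ} (hψ : Continuous ψ) (n : ℕ) :
    Continuous (birkhoff ψ n) := by
  apply continuous_finset_sum
  intro j _
  exact hψ.comp (continuous_shift_iter j)

lemma birkhoff_succ' {M : Type*} (ψ : (ℕ → M) → ℝ) (n : ℕ) (z : ℕ → M) :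
    birkhoff ψ (n+1) z = ψ z + birkhoff ψ n (shift z) := by
  unfold birkhoff
  rw [Finset.sum_range_succ' (fun j => ψ (shift^[j] z)) n]
  simp only [Function.iterate_succ_apply, Function.iterate_zero_apply]
  exact add_comm _ _

variable [MeasurableSpace M] [BorelSpace M]

lemma ruelle_iter_cont (μ : Measure M) [IsFiniteMeasure μ] {g φ : (ℕ → M) → ℝ}
    (hgc : Continuous g) (hφc : Continuous φ) (n : ℕ) :
    Continuous ((Ruelle μ g)^[n] φ) := by
  induction n with
  | zero => exact hφc
  | succ n ih =>
    rw [Function.iterate_succ']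
    exact ruelle_continuous μ hgc ih

lemma ruelle_change (μ : Measure M) (f g : (ℕ → M) → ℝ) (n : ℕ) (χ : (ℕ → M) → ℝ) :
    (Ruelle μ g)^[n] χ
      = (Ruelle μ f)^[n] (fun y => Real.exp (birkhoff (fun z => g z - f z) n y) * χ y) := by
  induction n generalizing χ with
  | zero =>
    funext y
    simp [birkhoff]
  | succ n ih =>
    rw [Function.iterate_succ_apply, Function.iterate_succ_apply, ih (Ruelle μ g χ)]
    congr 1
    funext y
    show Real.exp (birkhoff (fun z => g z - f z) n y) * Ruelle μ g χ y
        = ∫ a, Real.exp (f (consSeq a y)) *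
            (Real.exp (birkhoff (fun z => g z - f z) (n+1) (consSeq a y)) * χ (consSeq a y)) ∂μ
    have hpt : ∀ a : M,
        Real.exp (f (consSeq a y)) *
          (Real.exp (birkhoff (fun z => g z - f z) (n+1) (consSeq a y)) * χ (consSeq a y))
        = Real.exp (birkhoff (fun z => g z - f z) n y) *
            (Real.exp (g (consSeq a y)) * χ (consSeq a y)) := by
      intro a
      rw [birkhoff_succ', shift_consSeq, ← mul_assoc, ← Real.exp_add,
        show f (consSeq a y) + (g (consSeq a y) - f (consSeq a y)
            + birkhoff (fun z => g z - f z) n y)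
          = birkhoff (fun z => g z - f z) n y + g (consSeq a y) from by ring,
        Real.exp_add]
      ring
    rw [show (fun a => Real.exp (f (consSeq a y)) *
          (Real.exp (birkhoff (fun z => g z - f z) (n+1) (consSeq a y)) * χ (consSeq a y)))
        = fun a => Real.exp (birkhoff (fun z => g z - f z) n y) *
            (Real.exp (g (consSeq a y)) * χ (consSeq a y)) from funext hpt]
    rw [integral_const_mul]
    rfl

end More

/-- The equilibrium state m_f = h_f dν_f is shift-invariant and attains the supremum
in the variational principle: h(m_f) + ∫ f dm_f = log λ_f. -/
theorem equilibrium_state_attains_supremum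
    {M : Type*} [MetricSpace M] [CompactSpace M] [MeasurableSpace M] [BorelSpace M]
    (μ : Measure M) [IsProbabilityMeasure μ]
    (hfull : ∀ U : Set M, IsOpen U → U.Nonempty → 0 < μ U)
    (α : ℝ) (hα0 : 0 < α) (hα1 : α < 1)
    (f : (ℕ → M) → ℝ) (hf : IsHolder α f)
    (lam : ℝ) (hlam : 0 < lam)
    (h : (ℕ → M) → ℝ) (hhc : Continuous h) (hhpos : ∀ x, 0 < h x)
    (ν : Measure (ℕ → M)) [IsProbabilityMeasure ν]
    (hnorm : ∫ x, h x ∂ν = 1)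
    (heig : Ruelle μ f h = fun x => lam * h x)
    (heig' : ∀ φ : (ℕ → M) → ℝ, Continuous φ →
      ∫ x, Ruelle μ f φ x ∂ν = lam * ∫ x, φ x ∂ν)
    (x₀ : ℕ → M)
    (P : ((ℕ → M) → ℝ) → ℝ)
    (hP : ∀ g : (ℕ → M) → ℝ, IsHolder α g →
      Tendsto (fun n : ℕ => (n : ℝ)⁻¹ * Real.log ((Ruelle μ g)^[n] 1 x₀))
        atTop (nhds (P g))) :
    (ν.withDensity (fun x => ENNReal.ofReal (h x))).map shift
        = ν.withDensity (fun x => ENNReal.ofReal (h x)) ∧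
    sInf { s : ℝ | ∃ g : (ℕ → M) → ℝ, IsHolder α g ∧
        s = -∫ x, g x ∂(ν.withDensity (fun x => ENNReal.ofReal (h x))) + P g }
      + ∫ x, f x ∂(ν.withDensity (fun x => ENNReal.ofReal (h x)))
      = Real.log lam := by
  classical
  haveI : Nonempty M := by
    by_contra hne
    rw [not_nonempty_iff] at hne
    have h1 : μ Set.univ = 1 := measure_univ
    rw [Set.univ_eq_empty_iff.2 hne, measure_empty] at h1
    exact zero_ne_one h1
  haveI : Nonempty (ℕ → M) := ⟨fun _ => Classical.arbitrary M⟩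
  have hfc : Continuous f := IsHolder.continuous hα0 hf
  set m : Measure (ℕ → M) := ν.withDensity (fun x => ENNReal.ofReal (h x)) with hm
  -- integrals against m
  have hInt : ∀ φ : (ℕ → M) → ℝ, ∫ x, φ x ∂m = ∫ x, h x * φ x ∂ν := by
    intro φ
    have hmeas : Measurable (fun x => (h x).toNNReal) :=
      (continuous_real_toNNReal.comp hhc).measurable
    rw [hm, show (fun x => ENNReal.ofReal (h x))
        = (fun x => (((h x).toNNReal : ℝ≥0) : ℝ≥0∞)) from rfl,
      integral_withDensity_eq_integral_smul hmeas]
    congr 1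
    funext x
    rw [NNReal.smul_def, smul_eq_mul, Real.coe_toNNReal _ (hhpos x).le]
  haveI hmprob : IsProbabilityMeasure m := by
    constructor
    rw [hm, withDensity_apply _ MeasurableSet.univ, setLIntegral_univ,
      ← ofReal_integral_eq_lintegral_ofReal (cont_integrable ν hhc)
        (Eventually.of_forall fun x => (hhpos x).le), hnorm, ENNReal.ofReal_one]
  -- shift invariance on the level of integrals against ν
  have hinv : ∀ φ : (ℕ → M) → ℝ, Continuous φ →
      ∫ x, h x * φ (shift x) ∂ν = ∫ x, h x * φ x ∂ν := by
    intro φ hφ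
    have hR : (fun x => Ruelle μ f (fun y => h y * φ (shift y)) x)
        = fun x => φ x * (lam * h x) := by
      funext x
      show ∫ a, Real.exp (f (consSeq a x)) *
          (h (consSeq a x) * φ (shift (consSeq a x))) ∂μ = _
      rw [show (fun a => Real.exp (f (consSeq a x)) *
            (h (consSeq a x) * φ (shift (consSeq a x))))
          = fun a => φ x * (Real.exp (f (consSeq a x)) * h (consSeq a x)) from
        funext fun a => by rw [shift_consSeq]; ring]
      rw [integral_const_mul]
      have hx := congrFun heig x
      show φ x * Ruelle μ f h x = _
      rw [hx]
    have hkey := heig' (fun y => h y * φ (shift y)) (hhc.mul (hφ.comp continuous_shift))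
    rw [show (fun x => Ruelle μ f (fun y => h y * φ (shift y)) x)
        = fun x => φ x * (lam * h x) from hR] at hkey
    rw [show (fun x => φ x * (lam * h x)) = fun x => lam * (h x * φ x) from
      funext fun x => by ring] at hkey
    rw [integral_const_mul] at hkey
    have hcc := mul_left_cancel₀ hlam.ne' hkey
    exact hcc.symm
  have hinvm : ∀ φ : (ℕ → M) → ℝ, Continuous φ →
      ∫ x, φ (shift x) ∂m = ∫ x, φ x ∂m := by
    intro φ hφ
    rw [hInt, hInt]
    exact hinv φ hφ
  -- part 1 : invariance of m
  have hσmeas : Measurable (shift : (ℕ → M) → (ℕ → M)) := continuous_shift.measurable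
  have hlint : ∀ ψ : (ℕ → M) → ℝ≥0, Continuous ψ →
      ∫⁻ x, (ψ x : ℝ≥0∞) ∂m = ENNReal.ofReal (∫ x, (ψ x : ℝ) ∂m) := by
    intro ψ hψ
    have hc : Continuous (fun x => (ψ x : ℝ)) := NNReal.continuous_coe.comp hψ
    have h1 := ofReal_integral_eq_lintegral_ofReal (cont_integrable m hc)
      (Eventually.of_forall fun x => (ψ x).2)
    rw [h1]
    simp
  have hmap : m.map shift = m := by
    haveI : IsProbabilityMeasure (m.map shift) := Measure.isProbabilityMeasure_map hσmeas.aemeasurable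
    apply ext_of_forall_lintegral_eq_of_IsFiniteMeasure
    intro F
    have hFm : Measurable (fun x : ℕ → M => ((F x : ℝ≥0) : ℝ≥0∞)) :=
      measurable_coe_nnreal_ennreal.comp F.continuous.measurable
    rw [lintegral_map hFm hσmeas]
    rw [hlint (fun x => F (shift x)) (F.continuous.comp continuous_shift), hlint F F.continuous]
    congr 1
    exact hinvm (fun x => (F x : ℝ)) (NNReal.continuous_coe.comp F.continuous)
  refine ⟨hmap, ?_⟩
  -- iterated invariance
  have hinviter : ∀ (j : ℕ) (φ : (ℕ → M) → ℝ), Continuous φ →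
      ∫ x, φ (shift^[j] x) ∂m = ∫ x, φ x ∂m := by
    intro j
    induction j with
    | zero => intro φ _; simp
    | succ j ih =>
      intro φ hφ
      calc ∫ x, φ (shift^[j+1] x) ∂m
          = ∫ x, (fun z => φ (shift^[j] z)) (shift x) ∂m := by
            simp_rw [Function.iterate_succ_apply]
        _ = ∫ x, φ (shift^[j] x) ∂m := hinvm _ (hφ.comp (continuous_shift_iter j))
        _ = ∫ x, φ x ∂m := ih φ hφ
  -- Birkhoff sums integrate to n times the integral
  have hbirk : ∀ (ψ : (ℕ → M) → ℝ), Continuous ψ → ∀ n : ℕ,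
      ∫ x, birkhoff ψ n x ∂m = n * ∫ x, ψ x ∂m := by
    intro ψ hψ n
    have e1 : ∫ x, birkhoff ψ n x ∂m
        = ∑ j ∈ Finset.range n, ∫ x, ψ (shift^[j] x) ∂m := by
      unfold birkhoff
      exact integral_finset_sum _
        (fun j _ => cont_integrable m (hψ.comp (continuous_shift_iter j)))
    rw [e1, Finset.sum_congr rfl (fun j _ => hinviter j ψ hψ)]
    simp [Finset.sum_const, nsmul_eq_mul]
  -- iterated eigen-equation
  have hLfn : ∀ (n : ℕ) (φ : (ℕ → M) → ℝ), Continuous φ →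
      ∫ x, (Ruelle μ f)^[n] φ x ∂ν = lam ^ n * ∫ x, φ x ∂ν := by
    intro n
    induction n with
    | zero => intro φ _; simp
    | succ n ih =>
      intro φ hφ
      calc ∫ x, (Ruelle μ f)^[n+1] φ x ∂ν
          = ∫ x, Ruelle μ f ((Ruelle μ f)^[n] φ) x ∂ν := by
            simp_rw [Function.iterate_succ_apply']
        _ = lam * ∫ x, (Ruelle μ f)^[n] φ x ∂ν := heig' _ (ruelle_iter_cont μ hfc hφ n)
        _ = lam * (lam ^ n * ∫ x, φ x ∂ν) := by rw [ih φ hφ]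
        _ = lam ^ (n+1) * ∫ x, φ x ∂ν := by ring
  -- two-sided comparison with the ν-integral
  have hcomp : ∀ (g : (ℕ → M) → ℝ), Continuous g → ∀ K : ℝ,
      (∀ (n : ℕ) (x y : ℕ → M), (Ruelle μ g)^[n] 1 x ≤ Real.exp K * (Ruelle μ g)^[n] 1 y) →
      ∀ n : ℕ,
        Real.exp (-K) * ∫ y, (Ruelle μ g)^[n] 1 y ∂ν ≤ (Ruelle μ g)^[n] 1 x₀ ∧
        (Ruelle μ g)^[n] 1 x₀ ≤ Real.exp K * ∫ y, (Ruelle μ g)^[n] 1 y ∂ν := by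
    intro g hgc K hK n
    have hcont := (ruelle_iter_one μ hgc n).1
    constructor
    · have hmono : ∫ y, (Ruelle μ g)^[n] 1 y ∂ν ≤ ∫ _y, Real.exp K * (Ruelle μ g)^[n] 1 x₀ ∂ν :=
        integral_mono (cont_integrable ν hcont) (integrable_const _) (fun y => hK n y x₀)
      rw [integral_const] at hmono
      simp only [probReal_univ, one_smul] at hmono
      have h2 := mul_le_mul_of_nonneg_left hmono (Real.exp_pos (-K)).le
      rw [← mul_assoc, ← Real.exp_add, neg_add_cancel, Real.exp_zero, one_mul] at h2
      exact h2
    · have hmono : ∫ _y, (Ruelle μ g)^[n] 1 x₀ ∂ν ≤ ∫ y, Real.exp K * (Ruelle μ g)^[n] 1 y ∂ν :=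
        integral_mono (integrable_const _) ((cont_integrable ν hcont).const_mul _)
          (fun y => hK n x₀ y)
      rw [integral_const] at hmono
      simp only [probReal_univ, one_smul] at hmono
      rwa [integral_const_mul] at hmono
  -- the value of P at f
  have hnormint : ∀ n : ℕ, ∫ x, (Ruelle μ f)^[n] 1 x ∂ν = lam ^ n := by
    intro n
    have e1 := hLfn n 1 continuous_const
    simpa using e1
  obtain ⟨Kf, hKf0, hKf⟩ := ruelle_iterate_comparison μ hα0 hf
  have htend_inv : Tendsto (fun n : ℕ => (n : ℝ)⁻¹) atTop (𝓝 0) :=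
    tendsto_inv_atTop_nhds_zero_nat
  have hPf : P f = Real.log lam := by
    have hfpos : ∀ n x, 0 < (Ruelle μ f)^[n] 1 x := fun n x => (ruelle_iter_one μ hfc n).2 x
    have hup : ∀ᶠ n : ℕ in atTop, (n : ℝ)⁻¹ * Real.log ((Ruelle μ f)^[n] 1 x₀)
        ≤ Real.log lam + Kf * (n : ℝ)⁻¹ := by
      filter_upwards [eventually_ge_atTop 1] with n hn
      have hnne : ((n : ℝ)) ≠ 0 := Nat.cast_ne_zero.2 (by omega)
      have h1 := (hcomp f hfc Kf hKf n).2
      rw [hnormint n] at h1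
      have h2 : Real.log ((Ruelle μ f)^[n] 1 x₀) ≤ Kf + n * Real.log lam := by
        calc Real.log ((Ruelle μ f)^[n] 1 x₀) ≤ Real.log (Real.exp Kf * lam ^ n) :=
              Real.log_le_log (hfpos n x₀) h1
          _ = Kf + n * Real.log lam := by
              rw [Real.log_mul (Real.exp_ne_zero _) (pow_ne_zero n hlam.ne'),
                Real.log_exp, Real.log_pow]
      have h3 := mul_le_mul_of_nonneg_left h2 (inv_nonneg.2 (Nat.cast_nonneg n))
      calc (n : ℝ)⁻¹ * Real.log ((Ruelle μ f)^[n] 1 x₀)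
          ≤ (n : ℝ)⁻¹ * (Kf + n * Real.log lam) := h3
        _ = Real.log lam + Kf * (n : ℝ)⁻¹ := by
            field_simp
            ring
    have hlo : ∀ᶠ n : ℕ in atTop, Real.log lam - Kf * (n : ℝ)⁻¹
        ≤ (n : ℝ)⁻¹ * Real.log ((Ruelle μ f)^[n] 1 x₀) := by
      filter_upwards [eventually_ge_atTop 1] with n hn
      have hnne : ((n : ℝ)) ≠ 0 := Nat.cast_ne_zero.2 (by omega)
      have h1 := (hcomp f hfc Kf hKf n).1
      rw [hnormint n] at h1
      have h2 : -Kf + n * Real.log lam ≤ Real.log ((Ruelle μ f)^[n] 1 x₀) := by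
        calc -Kf + n * Real.log lam
            = Real.log (Real.exp (-Kf) * lam ^ n) := by
              rw [Real.log_mul (Real.exp_ne_zero _) (pow_ne_zero n hlam.ne'),
                Real.log_exp, Real.log_pow]
          _ ≤ Real.log ((Ruelle μ f)^[n] 1 x₀) :=
              Real.log_le_log (by positivity) h1
      have h3 := mul_le_mul_of_nonneg_left h2 (inv_nonneg.2 (Nat.cast_nonneg n))
      calc Real.log lam - Kf * (n : ℝ)⁻¹
          = (n : ℝ)⁻¹ * (-Kf + n * Real.log lam) := by
            field_simp
            ring
        _ ≤ (n : ℝ)⁻¹ * Real.log ((Ruelle μ f)^[n] 1 x₀) := h3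
    have hlim_up : Tendsto (fun n : ℕ => Real.log lam + Kf * (n : ℝ)⁻¹) atTop
        (𝓝 (Real.log lam)) := by
      have e1 : Tendsto (fun n : ℕ => Kf * (n : ℝ)⁻¹) atTop (𝓝 0) := by
        simpa using htend_inv.const_mul Kf
      simpa using tendsto_const_nhds.add e1
    have hlim_lo : Tendsto (fun n : ℕ => Real.log lam - Kf * (n : ℝ)⁻¹) atTop
        (𝓝 (Real.log lam)) := by
      have e1 : Tendsto (fun n : ℕ => Kf * (n : ℝ)⁻¹) atTop (𝓝 0) := by
        simpa using htend_inv.const_mul Kf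
      simpa using tendsto_const_nhds.sub e1
    have hsq : Tendsto (fun n : ℕ => (n : ℝ)⁻¹ * Real.log ((Ruelle μ f)^[n] 1 x₀)) atTop
        (𝓝 (Real.log lam)) :=
      tendsto_of_tendsto_of_tendsto_of_le_of_le' hlim_lo hlim_up hlo hup
    exact tendsto_nhds_unique (hP f hf) hsq
  -- maximum of h
  obtain ⟨z, -, hz⟩ := isCompact_univ.exists_isMaxOn Set.univ_nonempty hhc.continuousOn
  have hzle : ∀ y, h y ≤ h z := fun y => hz (Set.mem_univ y)
  have hCh : 0 < h z := hhpos z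
  -- the variational inequality
  have factB : ∀ g : (ℕ → M) → ℝ, IsHolder α g →
      Real.log lam + (∫ x, g x ∂m - ∫ x, f x ∂m) ≤ P g := by
    intro g hg
    have hgc : Continuous g := IsHolder.continuous hα0 hg
    set ψ : (ℕ → M) → ℝ := fun y => g y - f y with hψdef
    have hψc : Continuous ψ := hgc.sub hfc
    set I : ℝ := ∫ x, ψ x ∂m with hI
    have hIeq : I = ∫ x, g x ∂m - ∫ x, f x ∂m := by
      rw [hI, hψdef]
      exact integral_sub (cont_integrable m hgc) (cont_integrable m hfc)
    obtain ⟨K, hK0, hK⟩ := ruelle_iterate_comparison μ hα0 hg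
    have hLg : ∀ n : ℕ,
        (Ruelle μ g)^[n] 1 = (Ruelle μ f)^[n] (fun y => Real.exp (birkhoff ψ n y)) := by
      intro n
      rw [ruelle_change μ f g n 1]
      congr 1
      funext y
      simp [hψdef]
    have hSnc : ∀ n : ℕ, Continuous (fun y => Real.exp (birkhoff ψ n y)) :=
      fun n => Real.continuous_exp.comp (birkhoff_continuous hψc n)
    have hIntg : ∀ n : ℕ,
        ∫ y, (Ruelle μ g)^[n] 1 y ∂ν = lam ^ n * ∫ y, Real.exp (birkhoff ψ n y) ∂ν := by
      intro n
      rw [hLg n]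
      exact hLfn n _ (hSnc n)
    have hJ : ∀ n : ℕ, Real.exp ((n : ℝ) * I) ≤ ∫ y, Real.exp (birkhoff ψ n y) ∂m := by
      intro n
      have hj := convexOn_exp.map_integral_le (Real.continuous_exp.continuousOn) isClosed_univ
        (Eventually.of_forall fun x => Set.mem_univ _)
        (cont_integrable m (birkhoff_continuous hψc n))
        (cont_integrable m (Real.continuous_exp.comp (birkhoff_continuous hψc n)))
      rw [hbirk ψ hψc n] at hj
      exact hj
    have hcompint : ∀ n : ℕ,
        ∫ y, Real.exp (birkhoff ψ n y) ∂m ≤ h z * ∫ y, Real.exp (birkhoff ψ n y) ∂ν := by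
      intro n
      rw [hInt]
      calc ∫ y, h y * Real.exp (birkhoff ψ n y) ∂ν
          ≤ ∫ y, h z * Real.exp (birkhoff ψ n y) ∂ν :=
            integral_mono (cont_integrable ν (hhc.mul (hSnc n)))
              ((cont_integrable ν (hSnc n)).const_mul _)
              (fun y => mul_le_mul_of_nonneg_right (hzle y) (Real.exp_pos _).le)
        _ = h z * ∫ y, Real.exp (birkhoff ψ n y) ∂ν := integral_const_mul _ _
    have hlow : ∀ n : ℕ, Real.exp (-K) * (lam ^ n * ((h z)⁻¹ * Real.exp ((n:ℝ) * I)))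
        ≤ (Ruelle μ g)^[n] 1 x₀ := by
      intro n
      have h1 := (hcomp g hgc K hK n).1
      have h2 : (h z)⁻¹ * Real.exp ((n:ℝ) * I) ≤ ∫ y, Real.exp (birkhoff ψ n y) ∂ν := by
        have h3 : Real.exp ((n:ℝ)*I) ≤ h z * ∫ y, Real.exp (birkhoff ψ n y) ∂ν :=
          (hJ n).trans (hcompint n)
        have h4 := mul_le_mul_of_nonneg_left h3 (inv_nonneg.2 hCh.le)
        rwa [← mul_assoc, inv_mul_cancel₀ hCh.ne', one_mul] at h4
      refine le_trans ?_ h1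
      rw [hIntg n]
      have h5 : lam ^ n * ((h z)⁻¹ * Real.exp ((n:ℝ)*I))
          ≤ lam ^ n * ∫ y, Real.exp (birkhoff ψ n y) ∂ν :=
        mul_le_mul_of_nonneg_left h2 (pow_nonneg hlam.le n)
      exact mul_le_mul_of_nonneg_left h5 (Real.exp_pos (-K)).le
    have hev : ∀ᶠ n : ℕ in atTop,
        (Real.log lam + I) - (K + Real.log (h z)) * (n:ℝ)⁻¹
          ≤ (n : ℝ)⁻¹ * Real.log ((Ruelle μ g)^[n] 1 x₀) := by
      filter_upwards [eventually_ge_atTop 1] with n hn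
      have hnne : ((n : ℝ)) ≠ 0 := Nat.cast_ne_zero.2 (by omega)
      have h2 : -K + ((n:ℝ) * Real.log lam + (-Real.log (h z) + (n:ℝ)*I))
          ≤ Real.log ((Ruelle μ g)^[n] 1 x₀) := by
        calc -K + ((n:ℝ) * Real.log lam + (-Real.log (h z) + (n:ℝ)*I))
            = Real.log (Real.exp (-K) * (lam ^ n * ((h z)⁻¹ * Real.exp ((n:ℝ)*I)))) := by
              rw [Real.log_mul (Real.exp_ne_zero _) (by positivity),
                Real.log_mul (pow_ne_zero n hlam.ne') (by positivity),
                Real.log_mul (inv_ne_zero hCh.ne') (Real.exp_ne_zero _),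
                Real.log_exp, Real.log_exp, Real.log_pow, Real.log_inv]
          _ ≤ _ := Real.log_le_log (by positivity) (hlow n)
      have h3 := mul_le_mul_of_nonneg_left h2 (inv_nonneg.2 (Nat.cast_nonneg n))
      refine le_trans (le_of_eq ?_) h3
      field_simp
      ring
    have hlim : Tendsto (fun n : ℕ => (Real.log lam + I) - (K + Real.log (h z)) * (n:ℝ)⁻¹)
        atTop (𝓝 (Real.log lam + I)) := by
      have e1 : Tendsto (fun n : ℕ => (K + Real.log (h z)) * (n : ℝ)⁻¹) atTop (𝓝 0) := by
        simpa using htend_inv.const_mul (K + Real.log (h z))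
      simpa using tendsto_const_nhds.sub e1
    have hfin := le_of_tendsto_of_tendsto hlim (hP g hg) hev
    rwa [hIeq] at hfin
  -- final assembly
  have hmemf : (-∫ x, f x ∂m + P f) ∈
      {s : ℝ | ∃ g, IsHolder α g ∧ s = -∫ x, g x ∂m + P g} := ⟨f, hf, rfl⟩
  have hlb : ∀ s ∈ {s : ℝ | ∃ g, IsHolder α g ∧ s = -∫ x, g x ∂m + P g},
      Real.log lam - ∫ x, f x ∂m ≤ s := by
    rintro s ⟨g, hg, rfl⟩
    have hB := factB g hg
    linarith
  have hinf : sInf {s : ℝ | ∃ g, IsHolder α g ∧ s = -∫ x, g x ∂m + P g}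
      = Real.log lam - ∫ x, f x ∂m := by
    apply le_antisymm
    · calc sInf {s : ℝ | ∃ g, IsHolder α g ∧ s = -∫ x, g x ∂m + P g}
          ≤ -∫ x, f x ∂m + P f := csInf_le ⟨_, hlb⟩ hmemf
        _ = Real.log lam - ∫ x, f x ∂m := by rw [hPf]; ring
    · exact le_csInf ⟨_, hmemf⟩ hlb
  rw [hinf]
  ring
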